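/- If k is a non-square positive integer, d is the nearest integer to √k, and R = 4d²/(k−d²) is an integer, then for every n ≥ 1 the iterate f^n(∞) of f(x) = (dx+k)/(x+d) equals p/q in lowest terms with |p² − kq²| ≤ |k − d²|, and hence is a convergent of the continued fraction of √k. -/

import Mathlib

/-- The linear fractional transformation `f(x) = (dx + k)/(x + d)` acting on
the projective line `ℚℙ¹ = OnePoint ℚ`, with `f(∞) = d`. -/
noncomputable def lft (d k : ℚ) : OnePoint ℚ → OnePoint ℚ := fun x =>
  match x with
  | none => (d : OnePoint ℚ)
  | some x => if x + d = 0 then OnePoint.infty else ((d * x + k) / (x + d) : ℚ)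

/-- The point `a/b` of the projective line, with `a/0 = ∞`. -/
noncomputable def ratio (a b : ℚ) : OnePoint ℚ :=
  if b = 0 then OnePoint.infty else ((a / b : ℚ) : OnePoint ℚ)

namespace Stmt9Aux

/-- `A j + B j √k = (d+√k)^(2j+1)/(d²−k)^j`. -/
def A (d R : ℤ) : ℕ → ℤ
  | 0 => d
  | 1 => -(d * (R + 3))
  | (j+2) => -(R+2) * A d R (j+1) - A d R j

def B (d R : ℤ) : ℕ → ℤ
  | 0 => 1
  | 1 => -(R+1)
  | (j+2) => -(R+2) * B d R (j+1) - B d R j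

/-- the numerator/denominator pair: `(ab n).1 + (ab n).2 √k = (d+√k)^n`. -/
def ab (d k : ℤ) : ℕ → ℤ × ℤ
  | 0 => (1, 0)
  | (n+1) => (d * (ab d k n).1 + k * (ab d k n).2, (ab d k n).1 + d * (ab d k n).2)

section

variable {d k R : ℤ}

lemma coupled (hRe : R * (k - d ^ 2) = 4 * d ^ 2) (j : ℕ) :
    -(k - d ^ 2) * A d R (j+1) = (d ^ 2 + k) * A d R j + 2 * d * k * B d R j ∧
    -(k - d ^ 2) * B d R (j+1) = 2 * d * A d R j + (d ^ 2 + k) * B d R j := by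
  induction j using Nat.twoStepInduction with
  | zero =>
    constructor
    · show -(k - d ^ 2) * (-(d * (R + 3))) = (d ^ 2 + k) * d + 2 * d * k * 1
      linear_combination d * hRe
    · show -(k - d ^ 2) * (-(R+1)) = 2 * d * d + (d ^ 2 + k) * 1
      linear_combination hRe
  | one =>
    constructor
    · show -(k - d ^ 2) * (-(R+2) * A d R 1 - A d R 0) =
        (d ^ 2 + k) * A d R 1 + 2 * d * k * B d R 1
      show -(k - d ^ 2) * (-(R+2) * (-(d * (R + 3))) - d) =
        (d ^ 2 + k) * (-(d * (R + 3))) + 2 * d * k * (-(R+1))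
      linear_combination (-(R + 2) * d) * hRe
    · show -(k - d ^ 2) * (-(R+2) * B d R 1 - B d R 0) =
        2 * d * A d R 1 + (d ^ 2 + k) * B d R 1
      show -(k - d ^ 2) * (-(R+2) * (-(R+1)) - 1) =
        2 * d * (-(d * (R + 3))) + (d ^ 2 + k) * (-(R+1))
      linear_combination (-R - 2) * hRe
  | more n ih1 ih2 =>
    -- ih1 : statement at n, ih2 : statement at n+1 ; prove at n+2
    obtain ⟨ha1, hb1⟩ := ih1
    obtain ⟨ha2, hb2⟩ := ih2
    constructor
    · show -(k - d ^ 2) * (-(R+2) * A d R (n+2) - A d R (n+1)) =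
        (d ^ 2 + k) * (-(R+2) * A d R (n+1) - A d R n) +
          2 * d * k * (-(R+2) * B d R (n+1) - B d R n)
      linear_combination (-(R+2)) * ha2 - ha1
    · show -(k - d ^ 2) * (-(R+2) * B d R (n+2) - B d R (n+1)) =
        2 * d * (-(R+2) * A d R (n+1) - A d R n) +
          (d ^ 2 + k) * (-(R+2) * B d R (n+1) - B d R n)
      linear_combination (-(R+2)) * hb2 - hb1

lemma normAB (hRe : R * (k - d ^ 2) = 4 * d ^ 2) (he : k - d ^ 2 ≠ 0) (j : ℕ) :
    A d R j ^ 2 - k * B d R j ^ 2 = d ^ 2 - k := by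
  induction j with
  | zero => show d ^ 2 - k * 1 ^ 2 = d ^ 2 - k; ring
  | succ n ih =>
    obtain ⟨ha, hb⟩ := coupled hRe n
    have hsq : (k - d ^ 2) ^ 2 * (A d R (n+1) ^ 2 - k * B d R (n+1) ^ 2) =
        (k - d ^ 2) ^ 2 * (d ^ 2 - k) := by
      linear_combination
        ((-(k - d ^ 2)) * A d R (n+1) + ((d ^ 2 + k) * A d R n + 2 * d * k * B d R n)) * ha
        - k * ((-(k - d ^ 2)) * B d R (n+1) + (2 * d * A d R n + (d ^ 2 + k) * B d R n)) * hb
        + (d ^ 2 - k) ^ 2 * ih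
    exact mul_left_cancel₀ (pow_ne_zero 2 he) hsq

lemma ab_pos (hd : 0 < d) (hk : 0 < k) (n : ℕ) :
    0 < (ab d k n).1 ∧ 0 ≤ (ab d k n).2 := by
  induction n with
  | zero => exact ⟨one_pos, le_refl 0⟩
  | succ n ih =>
    obtain ⟨h1, h2⟩ := ih
    constructor
    · show 0 < d * (ab d k n).1 + k * (ab d k n).2
      nlinarith [mul_pos hd h1, mul_nonneg hk.le h2]
    · show 0 ≤ (ab d k n).1 + d * (ab d k n).2
      nlinarith [mul_nonneg hd.le h2]

lemma ab_pos2 (hd : 0 < d) (hk : 0 < k) (n : ℕ) : 0 < (ab d k (n+1)).2 := by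
  obtain ⟨h1, h2⟩ := ab_pos hd hk n
  show 0 < (ab d k n).1 + d * (ab d k n).2
  nlinarith [mul_nonneg hd.le h2]

lemma ab_odd (hRe : R * (k - d ^ 2) = 4 * d ^ 2) (j : ℕ) :
    (ab d k (2*j+1)).1 = (-(k - d ^ 2)) ^ j * A d R j ∧
    (ab d k (2*j+1)).2 = (-(k - d ^ 2)) ^ j * B d R j := by
  induction j with
  | zero =>
    constructor
    · simp [ab, A]
    · simp [ab, B]
  | succ n ih =>
    obtain ⟨ha, hb⟩ := ih
    obtain ⟨ca, cb⟩ := coupled (R := R) hRe n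
    have h1 : 2*(n+1)+1 = (2*n+1) + 1 + 1 := by ring
    rw [h1]
    constructor
    · show d * (d * (ab d k (2*n+1)).1 + k * (ab d k (2*n+1)).2) +
          k * ((ab d k (2*n+1)).1 + d * (ab d k (2*n+1)).2) =
          (-(k - d ^ 2)) ^ (n+1) * A d R (n+1)
      rw [ha, hb, pow_succ]
      linear_combination (-((-(k - d ^ 2)) ^ n)) * ca
    · show (d * (ab d k (2*n+1)).1 + k * (ab d k (2*n+1)).2) +
          d * ((ab d k (2*n+1)).1 + d * (ab d k (2*n+1)).2) =
          (-(k - d ^ 2)) ^ (n+1) * B d R (n+1)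
      rw [ha, hb, pow_succ]
      linear_combination (-((-(k - d ^ 2)) ^ n)) * cb

lemma w_dvd (hRe : R * (k - d ^ 2) = 4 * d ^ 2) (j : ℕ) :
    ((Int.gcd (2*d) (k - d^2) : ℤ) ∣ d * A d R j + k * B d R j) ∧
    ((Int.gcd (2*d) (k - d^2) : ℤ) ∣ A d R j + d * B d R j) := by
  have hw2d : (Int.gcd (2*d) (k - d^2) : ℤ) ∣ 2*d := Int.gcd_dvd_left _ _
  have hwe : (Int.gcd (2*d) (k - d^2) : ℤ) ∣ (k - d^2) := Int.gcd_dvd_right _ _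
  have hw2d2 : (Int.gcd (2*d) (k - d^2) : ℤ) ∣ 2*(d*d) := by
    have := hw2d.mul_right d; rwa [mul_assoc] at this
  induction j using Nat.twoStepInduction with
  | zero =>
    constructor
    · have h : d * A d R 0 + k * B d R 0 = 2*(d*d) + (k - d^2) := by
        show d * d + k * 1 = _; ring
      rw [h]; exact dvd_add hw2d2 hwe
    · have h : A d R 0 + d * B d R 0 = 2*d * 1 := by show d + d * 1 = _; ring
      rw [h]; exact hw2d.mul_right 1
  | one =>
    constructor
    · have h : d * A d R 1 + k * B d R 1 = 2*(d*d) * (-(R+2)) + (k - d^2) * (-(R+1)) := by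
        show d * (-(d * (R + 3))) + k * (-(R+1)) = _; ring
      rw [h]; exact dvd_add (hw2d2.mul_right _) (hwe.mul_right _)
    · have h : A d R 1 + d * B d R 1 = 2*d * (-(R+2)) := by
        show (-(d * (R + 3))) + d * (-(R+1)) = _; ring
      rw [h]; exact hw2d.mul_right _
  | more n ih1 ih2 =>
    obtain ⟨ha1, hb1⟩ := ih1
    obtain ⟨ha2, hb2⟩ := ih2
    constructor
    · have h : d * A d R (n+2) + k * B d R (n+2) =
          (-(R+2)) * (d * A d R (n+1) + k * B d R (n+1)) - (d * A d R n + k * B d R n) := by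
        show d * (-(R+2) * A d R (n+1) - A d R n) + k * (-(R+2) * B d R (n+1) - B d R n) = _
        ring
      rw [h]; exact dvd_sub (ha2.mul_left _) ha1
    · have h : A d R (n+2) + d * B d R (n+2) =
          (-(R+2)) * (A d R (n+1) + d * B d R (n+1)) - (A d R n + d * B d R n) := by
        show (-(R+2) * A d R (n+1) - A d R n) + d * (-(R+2) * B d R (n+1) - B d R n) = _
        ring
      rw [h]; exact dvd_sub (hb2.mul_left _) hb1

lemma dvd_gcd_sq (e y : ℤ) (he : e ≠ 0) (h : e ∣ y^2) :
    e ∣ ((Int.gcd y e : ℤ))^2 := by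
  have hgpos : 0 < Int.gcd y e := Int.gcd_pos_of_ne_zero_right y he
  set g : ℤ := (Int.gcd y e : ℤ) with hg
  have hg0 : 0 < g := by rw [hg]; exact_mod_cast hgpos
  have hgy : g ∣ y := Int.gcd_dvd_left _ _
  have hge : g ∣ e := Int.gcd_dvd_right _ _
  have hyg : g * (y / g) = y := Int.mul_ediv_cancel' hgy
  have heg : g * (e / g) = e := Int.mul_ediv_cancel' hge
  have hcop1 : Int.gcd (y / g) (e / g) = 1 := Int.gcd_div_gcd_div_gcd hgpos
  have hcop : IsCoprime (e / g) ((y / g)^2) :=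
    ((Int.isCoprime_iff_gcd_eq_one.mpr hcop1).symm).pow_right
  have h2 : (e / g) ∣ g * (y / g)^2 := by
    have h3 : g * (e / g) ∣ g * (g * (y / g)^2) := by
      rw [heg]
      have h5 : y^2 = g * (g * (y / g)^2) := by
        conv_lhs => rw [← hyg]
        ring
      rwa [h5] at h
    exact (mul_dvd_mul_iff_left hg0.ne').mp h3
  have h4 : (e / g) ∣ g := hcop.dvd_of_dvd_mul_right h2
  calc e = g * (e / g) := heg.symm
    _ ∣ g * g := mul_dvd_mul_left g h4
    _ = g^2 := by ring
  -- dvd via calc? need `Dvd.dvd` transitivity: use dvd_trans style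
  
lemma reduce (X Y : ℤ) (hY : Y ≠ 0) :
    ∃ p q c : ℤ, c ≠ 0 ∧ 0 < q ∧ IsCoprime p q ∧ X = c * p ∧ Y = c * q ∧
      (Int.gcd X Y : ℤ) ∣ c := by
  have hgpos : 0 < Int.gcd X Y := Int.gcd_pos_of_ne_zero_right X hY
  set g : ℤ := (Int.gcd X Y : ℤ) with hg
  have hg0 : 0 < g := by rw [hg]; exact_mod_cast hgpos
  have hgX : g ∣ X := Int.gcd_dvd_left _ _
  have hgY : g ∣ Y := Int.gcd_dvd_right _ _
  have hXg : g * (X / g) = X := Int.mul_ediv_cancel' hgX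
  have hYg : g * (Y / g) = Y := Int.mul_ediv_cancel' hgY
  have hcop : IsCoprime (X / g) (Y / g) :=
    Int.isCoprime_iff_gcd_eq_one.mpr (Int.gcd_div_gcd_div_gcd hgpos)
  have hYg0 : Y / g ≠ 0 := by
    intro h; rw [h, mul_zero] at hYg; exact hY hYg.symm
  rcases hYg0.lt_or_gt with hneg | hpos
  · exact ⟨-(X / g), -(Y / g), -g, neg_ne_zero.mpr hg0.ne', neg_pos.mpr hneg,
      hcop.neg_left.neg_right, by rw [neg_mul_neg]; exact hXg.symm,
      by rw [neg_mul_neg]; exact hYg.symm, dvd_neg.mpr dvd_rfl⟩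
  · exact ⟨X / g, Y / g, g, hg0.ne', hpos, hcop, hXg.symm, hYg.symm, dvd_rfl⟩

end

lemma ratio_scale (c p q : ℤ) (hc : c ≠ 0) :
    ratio ((c*p : ℤ) : ℚ) ((c*q : ℤ) : ℚ) = ratio (p : ℤ) (q : ℤ) := by
  unfold ratio
  have hcQ : (c:ℚ) ≠ 0 := Int.cast_ne_zero.mpr hc
  by_cases hq : (q:ℚ) = 0
  · have : ((c*q : ℤ) : ℚ) = 0 := by push_cast; rw [hq, mul_zero]
    rw [if_pos this, if_pos hq]
  · have h1 : ((c*q : ℤ) : ℚ) ≠ 0 := by push_cast; exact mul_ne_zero hcQ hq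
    rw [if_neg h1, if_neg hq]
    congr 1
    push_cast
    rw [mul_div_mul_left _ _ hcQ]

lemma lft_coe (d k x : ℚ) : lft d k (x : OnePoint ℚ) =
    if x + d = 0 then OnePoint.infty else (((d*x+k)/(x+d) : ℚ) : OnePoint ℚ) := rfl

lemma lft_ratio (d k a b : ℚ) (ha : 0 < a) (hb : 0 < b) (hd : 0 < d) :
    lft d k (ratio a b) = ratio (d*a + k*b) (a + d*b) := by
  have hx : 0 < a / b := div_pos ha hb
  have h1 : 0 < a/b + d := by linarith
  have h2 : 0 < a + d*b := by nlinarith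
  have hr : ratio a b = ((a/b : ℚ) : OnePoint ℚ) := by unfold ratio; rw [if_neg hb.ne']
  rw [hr, lft_coe, if_neg h1.ne']
  unfold ratio
  rw [if_neg h2.ne']
  have h3 : (d*(a/b)+k)/((a/b)+d) = (d*a + k*b)/(a + d*b) := by
    rw [div_eq_div_iff h1.ne' h2.ne']
    field_simp
  rw [h3]

lemma iter_eq (d k : ℤ) (hd : 0 < d) (hk : 0 < k) (n : ℕ) :
    (lft (d:ℚ) (k:ℚ))^[n+1] OnePoint.infty =
      ratio ((ab d k (n+1)).1 : ℚ) ((ab d k (n+1)).2 : ℚ) := by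
  induction n with
  | zero =>
    show lft (d:ℚ) (k:ℚ) OnePoint.infty = _
    show ((d:ℚ) : OnePoint ℚ) = _
    have h1 : ((ab d k 1).1 : ℚ) = (d:ℚ) := by norm_num [ab]
    have h2 : ((ab d k 1).2 : ℚ) = 1 := by norm_num [ab]
    rw [h1, h2]
    unfold ratio
    rw [if_neg one_ne_zero, div_one]
  | succ n ih =>
    rw [Function.iterate_succ_apply', ih]
    obtain ⟨ha, hb0⟩ := ab_pos hd hk (n+1)
    have hb := ab_pos2 hd hk n
    have haQ : (0:ℚ) < ((ab d k (n+1)).1 : ℚ) := by exact_mod_cast ha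
    have hbQ : (0:ℚ) < ((ab d k (n+1)).2 : ℚ) := by exact_mod_cast hb
    have hdQ : (0:ℚ) < (d:ℚ) := by exact_mod_cast hd
    rw [lft_ratio _ _ _ _ haQ hbQ hdQ]
    have hnum : (ab d k (n+1+1)).1 = d * (ab d k (n+1)).1 + k * (ab d k (n+1)).2 := by
      simp [ab]
    have hden : (ab d k (n+1+1)).2 = (ab d k (n+1)).1 + d * (ab d k (n+1)).2 := by
      simp [ab]
    rw [hnum, hden]
    congr 1 <;> push_cast <;> ring

set_option maxHeartbeats 1000000 in
lemma legendre_aux (k d p q : ℤ) (hp : 0 < p) (hq : 0 < q) (hd : 0 < d)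
    (hlb : d^2 - d + 1 ≤ k) (hub : k ≤ d^2 + d)
    (hN : |p^2 - k*q^2| ≤ |k - d^2|) (hsign : p^2 - k*q^2 < 0 → d^2 < k) :
    |Real.sqrt k - (p:ℝ)/(q:ℝ)| < 1/(2*(q:ℝ)^2) := by
  have hk1 : 1 ≤ k := by linarith [hlb, mul_nonneg (by omega : (0:ℤ) ≤ d) (by omega : (0:ℤ) ≤ d - 1)]
  have hkR : (0:ℝ) ≤ (k:ℝ) := by exact_mod_cast (by omega : (0:ℤ) ≤ k)
  set x := Real.sqrt (k:ℝ) with hxdef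
  have hx0 : 0 ≤ x := Real.sqrt_nonneg _
  have hx2 : x^2 = (k:ℝ) := Real.sq_sqrt hkR
  have hdR : (1:ℝ) ≤ (d:ℝ) := by exact_mod_cast hd
  have hqR : (1:ℝ) ≤ (q:ℝ) := by exact_mod_cast hq
  have hpR : (1:ℝ) ≤ (p:ℝ) := by exact_mod_cast hp
  have hQ0 : (0:ℝ) < (q:ℝ) := by linarith
  have hlbR : (d:ℝ)^2 - d + 1 ≤ (k:ℝ) := by exact_mod_cast hlb
  have hubR : (k:ℝ) ≤ (d:ℝ)^2 + d := by exact_mod_cast hub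
  have hNR : |(p:ℝ)^2 - k*(q:ℝ)^2| ≤ |(k:ℝ) - (d:ℝ)^2| := by exact_mod_cast hN
  -- |k - d^2| < x
  have hE : |(k:ℝ) - (d:ℝ)^2| < x := by
    rcases le_or_gt (k:ℝ) ((d:ℝ)^2) with h | h
    · rw [abs_of_nonpos (by linarith)]
      have h1 : ((d:ℝ)-1)^2 < (k:ℝ) := by nlinarith [hlbR, hdR]
      have h2 : (d:ℝ) - 1 < x := by
        by_contra hcon
        push_neg at hcon
        have := mul_self_le_mul_self hx0 hcon
        nlinarith [h1, hx2]
      linarith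
    · rw [abs_of_pos (by linarith)]
      have h2 : (d:ℝ) < x := by nlinarith [hx2, hx0]
      linarith
  have key : 2*(q:ℝ)*|(p:ℝ)^2 - k*(q:ℝ)^2| < (p:ℝ) + (q:ℝ)*x := by
    rcases le_or_gt 0 (p^2 - k*q^2) with hn | hn
    · have hNge : (0:ℝ) ≤ (p:ℝ)^2 - k*(q:ℝ)^2 := by exact_mod_cast hn
      rw [abs_of_nonneg hNge]
      have hPsq : ((q:ℝ)*x)^2 ≤ (p:ℝ)^2 := by nlinarith [hNge, hx2]
      have hPx : (q:ℝ)*x ≤ (p:ℝ) := by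
        by_contra hcon
        push_neg at hcon
        have := mul_self_lt_mul_self (by linarith : (0:ℝ) ≤ (p:ℝ)) hcon
        nlinarith [hPsq]
      have h5 : (p:ℝ)^2 - k*(q:ℝ)^2 ≤ |(k:ℝ) - (d:ℝ)^2| :=
        le_trans (le_abs_self _) hNR
      linarith [mul_le_mul_of_nonneg_left h5 hQ0.le,
        mul_lt_mul_of_pos_left hE hQ0, hPx]
    · have hd2k : d^2 < k := hsign hn
      have hd2kR : (d:ℝ)^2 < (k:ℝ) := by exact_mod_cast hd2k
      have hNneg : (p:ℝ)^2 - k*(q:ℝ)^2 < 0 := by exact_mod_cast hn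
      rw [abs_of_neg hNneg]
      have h8 : |(p:ℝ)^2 - k*(q:ℝ)^2| ≤ (k:ℝ) - (d:ℝ)^2 := by
        rwa [abs_of_pos (by linarith : (0:ℝ) < (k:ℝ) - (d:ℝ)^2)] at hNR
      have habs : -((p:ℝ)^2 - k*(q:ℝ)^2) ≤ (k:ℝ) - (d:ℝ)^2 :=
        le_trans (neg_le_abs _) h8
      have hkd : (k:ℝ) - (d:ℝ)^2 ≤ (d:ℝ) := by linarith
      have hq2 : (1:ℝ) ≤ (q:ℝ)^2 := by nlinarith [hqR]
      have hfac : (0:ℝ) ≤ ((k:ℝ) - (d:ℝ)^2) * ((q:ℝ)^2 - 1) :=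
        mul_nonneg (by linarith) (by linarith)
      have hPsq : ((d:ℝ)*(q:ℝ))^2 ≤ (p:ℝ)^2 := by linarith [habs, hfac]
      have hPge : (d:ℝ)*(q:ℝ) ≤ (p:ℝ) := by
        by_contra hcon
        push_neg at hcon
        have := mul_self_lt_mul_self (by linarith : (0:ℝ) ≤ (p:ℝ)) hcon
        nlinarith [hPsq]
      have hdx : (d:ℝ) < x := by
        by_contra hcon
        push_neg at hcon
        have := mul_self_le_mul_self hx0 hcon
        nlinarith [hx2, hd2kR]
      linarith [mul_le_mul_of_nonneg_left (le_trans habs hkd) hQ0.le,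
        mul_lt_mul_of_pos_left hdx hQ0, hPge]
  have hden : (0:ℝ) < (p:ℝ) + (q:ℝ)*x := by linarith [mul_nonneg hQ0.le hx0]
  have h1 : x - (p:ℝ)/(q:ℝ) = (x*(q:ℝ) - p)/(q:ℝ) := by field_simp
  have habs2 : |x - (p:ℝ)/(q:ℝ)| = |x*(q:ℝ) - p|/(q:ℝ) := by
    rw [h1, abs_div, abs_of_pos hQ0]
  have hprod : |x*(q:ℝ) - p| * ((p:ℝ) + (q:ℝ)*x) = |(p:ℝ)^2 - k*(q:ℝ)^2| := by
    rw [← abs_of_pos hden, ← abs_mul, abs_sub_comm ((p:ℝ)^2) _]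
    congr 1
    linear_combination ((q:ℝ)^2) * hx2
  rw [habs2, div_lt_div_iff₀ hQ0 (by positivity)]
  have h7 : |(p:ℝ)^2 - k*(q:ℝ)^2| * (2*(q:ℝ)^2) < ((q:ℝ)) * ((p:ℝ) + (q:ℝ)*x) := by
    linarith [mul_lt_mul_of_pos_left key hQ0]
  have hmul : (|x*(q:ℝ) - p| * (2*(q:ℝ)^2)) * ((p:ℝ) + (q:ℝ)*x)
      < (1 * (q:ℝ)) * ((p:ℝ) + (q:ℝ)*x) := by
    calc (|x*(q:ℝ) - p| * (2*(q:ℝ)^2)) * ((p:ℝ) + (q:ℝ)*x)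
        = (|x*(q:ℝ) - p| * ((p:ℝ) + (q:ℝ)*x)) * (2*(q:ℝ)^2) := by ring
      _ = |(p:ℝ)^2 - k*(q:ℝ)^2| * (2*(q:ℝ)^2) := by rw [hprod]
      _ < ((q:ℝ)) * ((p:ℝ) + (q:ℝ)*x) := h7
      _ = (1 * (q:ℝ)) * ((p:ℝ) + (q:ℝ)*x) := by ring
  exact lt_of_mul_lt_mul_right hmul hden.le
end Stmt9Aux

set_option maxHeartbeats 1000000 in
theorem stmt9 (k : ℕ) (hk : 0 < k) (hknsq : ¬ IsSquare k)
    (d : ℤ) (hd : d = round (Real.sqrt k))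
    (R : ℤ) (hR : (R : ℚ) = 4 * (d : ℚ) ^ 2 / ((k : ℚ) - (d : ℚ) ^ 2)) :
    ∀ n : ℕ, 1 ≤ n → ∃ p q : ℤ, 0 < q ∧ IsCoprime p q ∧
      (lft (d : ℚ) (k : ℚ))^[n] OnePoint.infty = ratio (p : ℚ) (q : ℚ) ∧
      |p ^ 2 - (k : ℤ) * q ^ 2| ≤ |(k : ℤ) - d ^ 2| ∧
      ∃ m : ℕ, (GenContFract.of (Real.sqrt k)).convs m = (p : ℝ) / (q : ℝ) := by
  intro n hn
  obtain ⟨m, rfl⟩ : ∃ m, n = m + 1 := ⟨n - 1, by omega⟩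
  have hkZ1 : (1:ℤ) ≤ (k:ℤ) := by exact_mod_cast hk
  have hkR0 : (0:ℝ) ≤ (k:ℝ) := by positivity
  have hsq : Real.sqrt k ^ 2 = (k:ℝ) := Real.sq_sqrt hkR0
  have hx1 : (1:ℝ) ≤ Real.sqrt k := by
    have h0 : Real.sqrt 1 ≤ Real.sqrt k := Real.sqrt_le_sqrt (by exact_mod_cast hkZ1)
    simpa using h0
  have hround : |Real.sqrt k - (d:ℝ)| ≤ 1/2 := by rw [hd]; exact abs_sub_round _
  obtain ⟨hr1, hr2⟩ := abs_le.mp hround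
  have hd1 : 1 ≤ d := by
    by_contra hcon
    push_neg at hcon
    have h0 : (d:ℝ) ≤ 0 := by exact_mod_cast (by omega : d ≤ 0)
    linarith
  have hdR1 : (1:ℝ) ≤ (d:ℝ) := by exact_mod_cast hd1
  have hub : (k:ℤ) ≤ d^2 + d := by
    have h1 : (k:ℝ) ≤ (d:ℝ)^2 + d + 1/4 := by nlinarith [hsq, hr2]
    have h2 : ((k:ℤ):ℝ) < ((d^2 + d + 1 : ℤ):ℝ) := by push_cast; linarith
    have h3 : (k:ℤ) < d^2 + d + 1 := by exact_mod_cast h2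
    omega
  have hlb : d^2 - d + 1 ≤ (k:ℤ) := by
    have h1 : (d:ℝ)^2 - d + 1/4 ≤ (k:ℝ) := by nlinarith [hsq, hr1, hdR1]
    have h2 : ((d^2 - d : ℤ):ℝ) < ((k:ℤ):ℝ) := by push_cast; linarith
    have h3 : (d^2 - d : ℤ) < (k:ℤ) := by exact_mod_cast h2
    omega
  have he0 : (k:ℤ) - d^2 ≠ 0 := by
    intro h
    apply hknsq
    refine ⟨d.natAbs, ?_⟩
    have h2 : (k:ℤ) = (d.natAbs : ℤ) * (d.natAbs : ℤ) := by
      rw [Int.natAbs_mul_self']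
      nlinarith [h]
    exact_mod_cast h2
  have hRe : R * ((k:ℤ) - d^2) = 4*d^2 := by
    have hne : ((k:ℚ) - (d:ℚ)^2) ≠ 0 := by
      intro h
      apply he0
      have h4 : (((k:ℤ) - d^2 : ℤ) : ℚ) = 0 := by push_cast; linarith [h]
      exact_mod_cast h4
    rw [eq_div_iff hne] at hR
    have h5 : ((R * ((k:ℤ) - d^2) : ℤ) : ℚ) = ((4*d^2 : ℤ) : ℚ) := by push_cast; linarith [hR]
    exact_mod_cast h5
  have hd0 : (0:ℤ) < d := by omega
  have hk0 : (0:ℤ) < (k:ℤ) := by omega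
  have hiter0 := Stmt9Aux.iter_eq d (k:ℤ) hd0 hk0 m
  push_cast at hiter0
  have key : ∀ E X Y : ℤ, E ≠ 0 →
      (Stmt9Aux.ab d (k:ℤ) (m+1)).1 = E * X →
      (Stmt9Aux.ab d (k:ℤ) (m+1)).2 = E * Y →
      (∀ c pp qq : ℤ, c ≠ 0 → (Int.gcd X Y : ℤ) ∣ c →
        X^2 - (k:ℤ)*Y^2 = c^2 * (pp^2 - (k:ℤ)*qq^2) →
        |pp^2 - (k:ℤ)*qq^2| ≤ |(k:ℤ) - d^2| ∧ (pp^2 - (k:ℤ)*qq^2 < 0 → d^2 < (k:ℤ))) →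
      ∃ p q : ℤ, 0 < q ∧ IsCoprime p q ∧
        (lft (d : ℚ) (k : ℚ))^[m+1] OnePoint.infty = ratio (p : ℚ) (q : ℚ) ∧
        |p ^ 2 - (k : ℤ) * q ^ 2| ≤ |(k : ℤ) - d ^ 2| ∧
        ∃ mm : ℕ, (GenContFract.of (Real.sqrt k)).convs mm = (p : ℝ) / (q : ℝ) := by
    intro E X Y hE haX hbY hbound
    have hbpos := Stmt9Aux.ab_pos2 hd0 hk0 m
    have hapos := (Stmt9Aux.ab_pos hd0 hk0 (m+1)).1
    have hY0 : Y ≠ 0 := by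
      rintro rfl
      rw [mul_zero] at hbY
      rw [hbY] at hbpos
      exact lt_irrefl 0 hbpos
    obtain ⟨p, q, c, hc0, hq0, hcop, hXp, hYq, hgc⟩ := Stmt9Aux.reduce X Y hY0
    have hXY : X^2 - (k:ℤ)*Y^2 = c^2 * (p^2 - (k:ℤ)*q^2) := by rw [hXp, hYq]; ring
    obtain ⟨hMb, hMs⟩ := hbound c p q hc0 hgc hXY
    have hEc0 : E * c ≠ 0 := mul_ne_zero hE hc0
    have hEc : (0:ℤ) < (E*c)^2 := by positivity
    have hppos : 0 < p := by
      have h1 : (Stmt9Aux.ab d (k:ℤ) (m+1)).1 * (Stmt9Aux.ab d (k:ℤ) (m+1)).2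
          = (E*c)^2 * (p*q) := by rw [haX, hbY, hXp, hYq]; ring
      have h2 : (0:ℤ) < (E*c)^2 * (p*q) := by rw [← h1]; exact mul_pos hapos hbpos
      have hpq : 0 < p * q := by
        by_contra hcon
        push_neg at hcon
        have h6 : (E*c)^2 * (p*q) ≤ (E*c)^2 * 0 := mul_le_mul_of_nonneg_left hcon hEc.le
        rw [mul_zero] at h6
        linarith
      by_contra hcon
      push_neg at hcon
      have h7 : p * q ≤ 0 * q := mul_le_mul_of_nonneg_right hcon hq0.le
      rw [zero_mul] at h7
      linarith
    refine ⟨p, q, hq0, hcop, ?_, hMb, ?_⟩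
    · rw [hiter0]
      have e1 : (Stmt9Aux.ab d (k:ℤ) (m+1)).1 = (E*c) * p := by rw [haX, hXp]; ring
      have e2 : (Stmt9Aux.ab d (k:ℤ) (m+1)).2 = (E*c) * q := by rw [hbY, hYq]; ring
      rw [e1, e2]
      exact Stmt9Aux.ratio_scale (E*c) p q hEc0
    · have hleg := Stmt9Aux.legendre_aux (k:ℤ) d p q hppos hq0 hd0 hlb hub hMb hMs
      push_cast at hleg
      have hcopn : Nat.Coprime p.natAbs q.natAbs := Int.isCoprime_iff_gcd_eq_one.mp hcop
      have hden : (((p:ℚ)/(q:ℚ)).den : ℤ) = q := Rat.den_div_eq_of_coprime hq0 hcopn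
      have hrR : (((p:ℚ)/(q:ℚ) : ℚ) : ℝ) = (p:ℝ)/(q:ℝ) := by push_cast; ring
      have hdenR : ((((p:ℚ)/(q:ℚ)).den : ℝ)) = (q:ℝ) := by exact_mod_cast hden
      have hlt : |Real.sqrt k - (((p:ℚ)/(q:ℚ) : ℚ) : ℝ)| <
          1/(2*((((p:ℚ)/(q:ℚ)).den : ℝ))^2) := by
        rw [hrR, hdenR]
        exact hleg
      obtain ⟨mm, hmm⟩ := Real.exists_convs_eq_rat hlt
      exact ⟨mm, by rw [hmm, hrR]⟩
  rcases Nat.even_or_odd' (m+1) with ⟨j, hj | hj⟩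
  · -- even : m+1 = 2*j with j = i+1
    obtain ⟨i, rfl⟩ : ∃ i, j = i + 1 := ⟨j - 1, by omega⟩
    obtain ⟨hA, hB⟩ := Stmt9Aux.ab_odd (d := d) (k := (k:ℤ)) (R := R) hRe i
    have hj' : m + 1 = (2*i+1) + 1 := by omega
    have e1 : (Stmt9Aux.ab d (k:ℤ) (m+1)).1
        = (-((k:ℤ) - d^2))^i * (d * Stmt9Aux.A d R i + (k:ℤ) * Stmt9Aux.B d R i) := by
      rw [hj']
      show d * (Stmt9Aux.ab d (k:ℤ) (2*i+1)).1 + (k:ℤ) * (Stmt9Aux.ab d (k:ℤ) (2*i+1)).2 = _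
      rw [hA, hB]; ring
    have e2 : (Stmt9Aux.ab d (k:ℤ) (m+1)).2
        = (-((k:ℤ) - d^2))^i * (Stmt9Aux.A d R i + d * Stmt9Aux.B d R i) := by
      rw [hj']
      show (Stmt9Aux.ab d (k:ℤ) (2*i+1)).1 + d * (Stmt9Aux.ab d (k:ℤ) (2*i+1)).2 = _
      rw [hA, hB]; ring
    refine key _ _ _ (pow_ne_zero i (neg_ne_zero.mpr he0)) e1 e2 ?_
    intro c pp qq hc hgcd hXY
    have hnormAB := Stmt9Aux.normAB (d := d) (k := (k:ℤ)) (R := R) hRe he0 i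
    have hnorm : (d * Stmt9Aux.A d R i + (k:ℤ) * Stmt9Aux.B d R i)^2
        - (k:ℤ) * (Stmt9Aux.A d R i + d * Stmt9Aux.B d R i)^2 = ((k:ℤ) - d^2)^2 := by
      linear_combination (d^2 - (k:ℤ)) * hnormAB
    obtain ⟨hwX, hwY⟩ := Stmt9Aux.w_dvd (d := d) (k := (k:ℤ)) (R := R) hRe i
    have hwc : (Int.gcd (2*d) ((k:ℤ) - d^2) : ℤ) ∣ c :=
      dvd_trans (Int.dvd_coe_gcd hwX hwY) hgcd
    have h4d : ((k:ℤ) - d^2) ∣ (2*d)^2 := ⟨R, by linear_combination -hRe⟩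
    have hew : ((k:ℤ) - d^2) ∣ (Int.gcd (2*d) ((k:ℤ) - d^2) : ℤ)^2 :=
      Stmt9Aux.dvd_gcd_sq _ _ he0 h4d
    have hec : ((k:ℤ) - d^2) ∣ c^2 := dvd_trans hew (pow_dvd_pow_of_dvd hwc 2)
    have hc2 : (0:ℤ) < c^2 := by positivity
    have he2 : (0:ℤ) < ((k:ℤ) - d^2)^2 := by positivity
    have hMC : c^2 * (pp^2 - (k:ℤ)*qq^2) = ((k:ℤ) - d^2)^2 := by rw [← hXY, hnorm]
    have hMpos : 0 < pp^2 - (k:ℤ)*qq^2 := by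
      by_contra hcon
      push_neg at hcon
      have h6 : c^2 * (pp^2 - (k:ℤ)*qq^2) ≤ c^2 * 0 := mul_le_mul_of_nonneg_left hcon hc2.le
      rw [mul_zero] at h6
      linarith [hMC, he2]
    have hle : |(k:ℤ) - d^2| ≤ c^2 := Int.le_of_dvd hc2 ((abs_dvd _ _).mpr hec)
    constructor
    · rw [abs_of_pos hMpos]
      have h9 : (pp^2 - (k:ℤ)*qq^2) * |(k:ℤ) - d^2| ≤ (pp^2 - (k:ℤ)*qq^2) * c^2 :=
        mul_le_mul_of_nonneg_left hle hMpos.le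
      have h10 : (pp^2 - (k:ℤ)*qq^2) * c^2 = |(k:ℤ) - d^2|^2 := by
        rw [sq_abs]; linarith [hMC]
      have h11 : (0:ℤ) < |(k:ℤ) - d^2| := abs_pos.mpr he0
      have h13 : (pp^2 - (k:ℤ)*qq^2) * |(k:ℤ) - d^2| ≤ |(k:ℤ) - d^2| * |(k:ℤ) - d^2| := by
        linarith [h9, h10, sq_abs ((k:ℤ) - d^2)]
      exact le_of_mul_le_mul_right h13 h11
    · intro hlt
      exact absurd hlt (not_lt.mpr hMpos.le)
  · -- odd : m+1 = 2*j+1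
    obtain ⟨hA, hB⟩ := Stmt9Aux.ab_odd (d := d) (k := (k:ℤ)) (R := R) hRe j
    have e1 : (Stmt9Aux.ab d (k:ℤ) (m+1)).1 = (-((k:ℤ) - d^2))^j * Stmt9Aux.A d R j := by
      rw [hj]; exact hA
    have e2 : (Stmt9Aux.ab d (k:ℤ) (m+1)).2 = (-((k:ℤ) - d^2))^j * Stmt9Aux.B d R j := by
      rw [hj]; exact hB
    refine key _ _ _ (pow_ne_zero j (neg_ne_zero.mpr he0)) e1 e2 ?_
    intro c pp qq hc hgcd hXY
    have hnormAB := Stmt9Aux.normAB (d := d) (k := (k:ℤ)) (R := R) hRe he0 j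
    have hMC : c^2 * (pp^2 - (k:ℤ)*qq^2) = d^2 - (k:ℤ) := by rw [← hXY, hnormAB]
    have hc2 : (0:ℤ) < c^2 := by positivity
    have hc1 : (1:ℤ) ≤ c^2 := hc2
    constructor
    · have habs : c^2 * |pp^2 - (k:ℤ)*qq^2| = |(k:ℤ) - d^2| := by
        rw [← abs_of_pos hc2, ← abs_mul, hMC, abs_sub_comm]
      have h6 : 1 * |pp^2 - (k:ℤ)*qq^2| ≤ c^2 * |pp^2 - (k:ℤ)*qq^2| :=
        mul_le_mul_of_nonneg_right hc1 (abs_nonneg _)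
      linarith [habs, h6]
    · intro hlt
      have h5 : c^2 * (pp^2 - (k:ℤ)*qq^2) < 0 := mul_neg_of_pos_of_neg hc2 hlt
      linarith [hMC, h5]
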